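/- arXiv:dg-ga/9707012 — 2 statements merged into one kernel-verified Lean document; each statement's English description precedes it below -/
import Mathlib

section
/- Let f : ℝ → M_d(ℂ) be a real-analytic family of self-adjoint d×d complex matrices, and suppose λ₀ is a simple (nondegenerate) eigenvalue of f(0). Then there exist ε > 0 and a real-analytic function λ : (-ε, ε) → ℝ with λ(0) = λ₀ such that λ(s) is a simple eigenvalue of f(s) for all |s| < ε. -/
open Set Polynomial

lemma aux_eval_charpoly {d : ℕ} (A : Matrix (Fin d) (Fin d) ℂ) (x : ℂ) :
    (A.charpoly).eval x = (x • (1 : Matrix (Fin d) (Fin d) ℂ) - A).det := by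
  rw [Matrix.charpoly, ← Polynomial.coe_evalRingHom, RingHom.map_det]
  congr 1
  ext i j
  by_cases h : i = j <;>
    simp [h, Matrix.charmatrix, Matrix.map_apply, Matrix.one_apply, Matrix.smul_apply,
      Matrix.sub_apply, Matrix.diagonal_apply]

lemma aux_rootMult_one {p : ℂ[X]} (hp : p ≠ 0) (a : ℂ) :
    p.rootMultiplicity a = 1 ↔ p.IsRoot a ∧ ¬p.derivative.IsRoot a := by
  constructor
  · intro h
    refine ⟨(Polynomial.rootMultiplicity_pos hp).mp (by omega), fun hd => ?_⟩
    have : 1 < p.rootMultiplicity a := by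
      apply Polynomial.lt_rootMultiplicity_of_isRoot_iterate_derivative_of_mem_nonZeroDivisors hp
      · intro m hm
        interval_cases m
        · simpa using (Polynomial.rootMultiplicity_pos hp).mp (by omega)
        · simpa using hd
      · simpa using mem_nonZeroDivisors_of_ne_zero (one_ne_zero)
    omega
  · rintro ⟨hr, hd⟩
    have h1 : 0 < p.rootMultiplicity a := (Polynomial.rootMultiplicity_pos hp).mpr hr
    have h2 : ¬ (1 < p.rootMultiplicity a) := fun h => by
      have := Polynomial.isRoot_iterate_derivative_of_lt_rootMultiplicity h
      simpa using hd this
    omega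

/-- If `f : ℝ → M_d(ℂ)` is a real-analytic family of self-adjoint matrices and `λ₀` is a
simple eigenvalue of `f 0`, then there is a real-analytic function `λ` on `(-ε, ε)` with
`λ 0 = λ₀` such that `λ s` is a simple eigenvalue of `f s` for all `|s| < ε`. -/
theorem stmt0 (d : ℕ) (f : ℝ → Matrix (Fin d) (Fin d) ℂ)
    (hf : ∀ i j, AnalyticOnNhd ℝ (fun s => f s i j) Set.univ)
    (hsa : ∀ s, (f s).IsHermitian)
    (lam0 : ℝ)
    (hsimple : ((f 0).charpoly).rootMultiplicity (lam0 : ℂ) = 1) :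
    ∃ ε > (0 : ℝ), ∃ lam : ℝ → ℝ,
      AnalyticOnNhd ℝ lam (Set.Ioo (-ε) ε) ∧ lam 0 = lam0 ∧
      ∀ s ∈ Set.Ioo (-ε) ε, ((f s).charpoly).rootMultiplicity ((lam s : ℂ)) = 1 := by
  classical
  -- the determinant function
  set G : ℝ × ℝ → ℂ :=
    fun q => ((q.2 : ℂ) • (1 : Matrix (Fin d) (Fin d) ℂ) - f q.1).det with hGdef
  have hGeval : ∀ s x : ℝ, G (s, x) = ((f s).charpoly).eval (x : ℂ) := by
    intro s x; rw [aux_eval_charpoly]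
  -- analyticity of G
  have hG : AnalyticOnNhd ℝ G univ := by
    intro q hq
    rw [hGdef]
    have hdet : ∀ M : Matrix (Fin d) (Fin d) ℂ, M.det =
        ∑ σ : Equiv.Perm (Fin d), ((Equiv.Perm.sign σ : ℤ) : ℂ) * ∏ i, M (σ i) i := by
      intro M
      rw [Matrix.det_apply]
      congr 1; ext σ
      rw [Units.smul_def, zsmul_eq_mul]
    simp only [hdet]
    apply Finset.analyticAt_fun_sum
    intro σ _
    apply AnalyticAt.mul analyticAt_const
    apply Finset.analyticAt_fun_prod
    intro i _
    have h1 : AnalyticAt ℝ (fun q : ℝ × ℝ => ((q.2 : ℂ)) * (1 : Matrix (Fin d) (Fin d) ℂ) (σ i) i) q := by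
      apply AnalyticAt.mul _ analyticAt_const
      exact (Complex.ofRealCLM.analyticAt _).comp analyticAt_snd
    have h2 : AnalyticAt ℝ (fun q : ℝ × ℝ => f q.1 (σ i) i) q :=
      (hf (σ i) i q.1 (mem_univ _)).comp analyticAt_fst
    have := h1.sub h2
    apply this.congr
    filter_upwards with w
    simp [Matrix.sub_apply, Matrix.smul_apply, smul_eq_mul]
  -- reality of G
  have hGim : ∀ s x : ℝ, (G (s, x)).im = 0 := by
    intro s x
    have h1 : (starRingEnd ℂ) (G (s, x)) = G (s, x) := by
      show star (G (s, x)) = G (s, x)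
      rw [hGdef]
      dsimp only
      rw [← Matrix.det_conjTranspose, Matrix.conjTranspose_sub, Matrix.conjTranspose_smul,
        Matrix.conjTranspose_one, hsa s]
      norm_num
    exact Complex.conj_eq_iff_im.mp h1
  -- real part of G
  set g : ℝ × ℝ → ℝ := fun q => (G q).re with hgdef
  have hg : AnalyticOnNhd ℝ g univ :=
    fun q hq => (Complex.reCLM.analyticAt _).comp (hG q hq)
  -- partial derivative function
  set D : ℝ × ℝ → ℂ := fun q => fderiv ℝ G q (0, 1) with hDdef
  have hD : AnalyticOnNhd ℝ D univ :=
    fun q hq => ((ContinuousLinearMap.apply ℝ ℂ ((0 : ℝ), (1 : ℝ))).analyticAt _).comp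
      (hG.fderiv q hq)
  -- D computes eval of derivative of charpoly
  have hline : ∀ s x : ℝ, HasDerivAt (fun t : ℝ => G (s, t)) (D (s, x)) x := by
    intro s x
    have h1 : HasFDerivAt G (fderiv ℝ G (s, x)) (s, x) :=
      ((hG (s, x) (mem_univ _)).differentiableAt).hasFDerivAt
    have h2 : HasDerivAt (fun t : ℝ => ((s : ℝ), t)) ((0 : ℝ), (1 : ℝ)) x :=
      (hasDerivAt_const x s).prodMk (hasDerivAt_id x)
    exact h1.comp_hasDerivAt x h2
  have hDeq : ∀ s x : ℝ, D (s, x) = ((f s).charpoly).derivative.eval (x : ℂ) := by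
    intro s x
    have h2 : HasDerivAt (fun t : ℝ => G (s, t))
        (((f s).charpoly).derivative.eval (x : ℂ)) x := by
      have := (Polynomial.hasDerivAt ((f s).charpoly) (x : ℂ)).comp_ofReal
      apply this.congr_of_eventuallyEq
      filter_upwards with t using (hGeval s t)
    exact (hline s x).unique h2
  have hDim : ∀ s x : ℝ, (D (s, x)).im = 0 := by
    intro s x
    have h1 : HasDerivAt (fun t : ℝ => (G (s, t)).im) ((D (s, x)).im) x :=
      (Complex.imCLM.hasFDerivAt).comp_hasDerivAt x (hline s x)
    have h2 : HasDerivAt (fun t : ℝ => (G (s, t)).im) 0 x := by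
      apply (hasDerivAt_const x (0:ℝ)).congr_of_eventuallyEq
      filter_upwards with t using (hGim s t)
    exact h1.unique h2
  -- facts at 0
  have hcp0 : (f 0).charpoly ≠ 0 := (Matrix.charpoly_monic _).ne_zero
  obtain ⟨h0root, h0der⟩ := (aux_rootMult_one hcp0 (lam0 : ℂ)).mp hsimple
  set x₀ : ℝ × ℝ := (0, lam0) with hx₀def
  have hD0 : D x₀ ≠ 0 := by
    rw [hx₀def, hDeq]; exact h0der
  -- the map F
  set F : ℝ × ℝ → ℝ × ℝ := fun q => (q.1, g q) with hFdef
  have hFanal : AnalyticAt ℝ F x₀ := analyticAt_fst.prod (hg x₀ (mem_univ _))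
  obtain ⟨p, hp⟩ := id hFanal
  -- compute the derivative of g in the second variable
  have hgd : ∀ q : ℝ × ℝ, HasFDerivAt g (Complex.reCLM.comp (fderiv ℝ G q)) q := by
    intro q
    exact Complex.reCLM.hasFDerivAt.comp q ((hG q (mem_univ _)).differentiableAt.hasFDerivAt)
  have hgsnd : fderiv ℝ g x₀ (0, 1) = (D x₀).re := by
    rw [(hgd x₀).fderiv]; rfl
  -- the derivative of F is bijective
  have hFd : HasFDerivAt F ((ContinuousLinearMap.fst ℝ ℝ ℝ).prod
      (Complex.reCLM.comp (fderiv ℝ G x₀))) x₀ := (hasFDerivAt_fst).prodMk (hgd x₀)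
  set L : ℝ × ℝ →L[ℝ] ℝ × ℝ := (ContinuousLinearMap.fst ℝ ℝ ℝ).prod
      (Complex.reCLM.comp (fderiv ℝ G x₀)) with hLdef
  have hDre : (D x₀).re ≠ 0 := by
    intro h
    exact hD0 (Complex.ext h (hDim 0 lam0))
  have hLinj : Function.Injective L := by
    have hker : ∀ w : ℝ × ℝ, L w = 0 → w = 0 := by
      rintro ⟨u, v⟩ hw
      have h1 : u = 0 := by
        have := congrArg Prod.fst hw
        simpa [hLdef] using this
      subst h1
      have h2 : Complex.reCLM (fderiv ℝ G x₀ ((0 : ℝ), v)) = 0 := by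
        have := congrArg Prod.snd hw
        simpa [hLdef] using this
      have h3 : ((0 : ℝ), v) = v • (((0 : ℝ), (1 : ℝ)) : ℝ × ℝ) := by
        simp [Prod.smul_mk]
      rw [h3, map_smul, map_smul] at h2
      have h4 : v * (D x₀).re = 0 := by simpa [hDdef, smul_eq_mul] using h2
      have h5 : v = 0 := by
        rcases mul_eq_zero.mp h4 with h | h
        · exact h
        · exact absurd h hDre
      simp [h5]
    intro a b hab
    have := hker (a - b) (by rw [map_sub, hab, sub_self])
    exact sub_eq_zero.mp this
  have hLbij : Function.Bijective (L.toLinearMap) :=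
    ⟨hLinj, (LinearMap.injective_iff_surjective).mp hLinj⟩
  set e : (ℝ × ℝ) ≃L[ℝ] (ℝ × ℝ) :=
    (LinearEquiv.ofBijective L.toLinearMap hLbij).toContinuousLinearEquiv with hedef
  have hecoe : (e : (ℝ × ℝ) →L[ℝ] (ℝ × ℝ)) = L := by
    exact ContinuousLinearMap.ext fun w => rfl
  have hLF : fderiv ℝ F x₀ = L := hFd.fderiv
  have hstrict : HasStrictFDerivAt F (e : (ℝ × ℝ) →L[ℝ] (ℝ × ℝ)) x₀ := by
    rw [hecoe, ← hLF]; exact hFanal.hasStrictFDerivAt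
  -- the partial homeomorphism
  set Φ := hstrict.toOpenPartialHomeomorph F with hΦdef
  have hΦcoe : ⇑Φ = F := hstrict.toOpenPartialHomeomorph_coe
  have hx₀src : x₀ ∈ Φ.source := hstrict.mem_toOpenPartialHomeomorph_source
  have hFx₀ : F x₀ = ((0 : ℝ), (0 : ℝ)) := by
    have hG0 : G (0, lam0) = 0 := by rw [hGeval]; exact h0root
    simp [hFdef, hgdef, hx₀def, hG0]
  have hp1 : p 1 = (continuousMultilinearCurryFin1 ℝ (ℝ × ℝ) (ℝ × ℝ)).symm
      (e : (ℝ × ℝ) →L[ℝ] (ℝ × ℝ)) := by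
    have := hp.fderiv_eq
    rw [hLF] at this
    rw [hecoe, this]
    exact (LinearIsometryEquiv.symm_apply_apply _ _).symm
  have hpΦ : HasFPowerSeriesAt Φ p x₀ := by rw [hΦcoe]; exact hp
  have hsymm : HasFPowerSeriesAt Φ.symm (p.leftInv e x₀) (Φ x₀) :=
    Φ.hasFPowerSeriesAt_symm hx₀src hpΦ hp1
  have hΦx₀ : Φ x₀ = ((0:ℝ), (0:ℝ)) := by rw [hΦcoe]; exact hFx₀
  rw [hΦx₀] at hsymm
  have hsymm_an : AnalyticAt ℝ Φ.symm ((0:ℝ), (0:ℝ)) := ⟨_, hsymm⟩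
  -- the implicit function
  set ψ : ℝ → ℝ × ℝ := fun s => (s, (0:ℝ)) with hψdef
  have hψan : ∀ s : ℝ, AnalyticAt ℝ ψ s := fun s => analyticAt_id.prod analyticAt_const
  set lam : ℝ → ℝ := fun s => (Φ.symm (ψ s)).2 with hlamdef
  have h00tgt : ((0:ℝ), (0:ℝ)) ∈ Φ.target := by
    rw [← hΦx₀]; exact Φ.map_source hx₀src
  have hlam0 : lam 0 = lam0 := by
    have : Φ.symm ((0:ℝ), (0:ℝ)) = x₀ := by
      rw [← hΦx₀]; exact Φ.left_inv hx₀src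
    rw [hlamdef]; simp only [hψdef]; rw [this]
  -- choosing ε
  have hE1 : ∀ᶠ s in nhds (0:ℝ), ψ s ∈ Φ.target := by
    have : ContinuousAt ψ 0 := (hψan 0).continuousAt
    exact this (Φ.open_target.mem_nhds (by simpa using h00tgt))
  have hE2 : ∀ᶠ s in nhds (0:ℝ), AnalyticAt ℝ Φ.symm (ψ s) := by
    have h1 := hsymm_an.eventually_analyticAt
    have : ContinuousAt ψ 0 := (hψan 0).continuousAt
    have h2 := this h1
    exact h2
  have hlamcont : ContinuousAt lam 0 := by
    apply ContinuousAt.comp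
    · exact continuousAt_snd
    · apply ContinuousAt.comp
      · simpa using hsymm_an.continuousAt
      · exact (hψan 0).continuousAt
  have hE3 : ∀ᶠ s in nhds (0:ℝ), D (s, lam s) ≠ 0 := by
    have hc : ContinuousAt (fun s => D (s, lam s)) 0 := by
      have := ContinuousAt.comp (x := (0:ℝ)) (g := D)
        ((hD (0, lam 0) (mem_univ _)).continuousAt)
        (continuousAt_id.prodMk hlamcont)
      exact this
    have : (fun s => D (s, lam s)) 0 ≠ 0 := by
      simpa [hlam0] using hD0
    exact hc.eventually_ne this
  obtain ⟨ε, hε, hball⟩ := Metric.mem_nhds_iff.mp ((hE1.and hE2).and hE3)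
  refine ⟨ε, hε, lam, ?_, hlam0, ?_⟩
  · -- analyticity of lam
    intro s hs
    have hs' : s ∈ Metric.ball (0:ℝ) ε := by
      rw [Real.ball_eq_Ioo]; simpa using hs
    obtain ⟨⟨_, h2⟩, _⟩ := hball hs'
    exact analyticAt_snd.comp (h2.comp (hψan s))
  · -- the eigenvalue property
    intro s hs
    have hs' : s ∈ Metric.ball (0:ℝ) ε := by
      rw [Real.ball_eq_Ioo]; simpa using hs
    obtain ⟨⟨h1, _⟩, h3⟩ := hball hs'
    -- Φ.symm (ψ s) = (s, lam s) and g (s, lam s) = 0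
    have hri : Φ (Φ.symm (ψ s)) = ψ s := Φ.right_inv h1
    rw [hΦcoe] at hri
    have hfst : (Φ.symm (ψ s)).1 = s := by
      have := congrArg Prod.fst hri
      simpa [hFdef, hψdef] using this
    have hΦs : Φ.symm (ψ s) = (s, lam s) := by
      rw [hlamdef]
      exact Prod.ext hfst rfl
    have hgz : g (s, lam s) = 0 := by
      have := congrArg Prod.snd hri
      rw [hΦs] at this
      simpa [hFdef, hψdef] using this
    have hroot : ((f s).charpoly).IsRoot ((lam s : ℂ)) := by
      have : G (s, lam s) = 0 := Complex.ext (by simpa [hgdef] using hgz) (hGim s (lam s))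
      rw [Polynomial.IsRoot, ← hGeval s (lam s), this]
    have hder : ¬ ((f s).charpoly).derivative.IsRoot ((lam s : ℂ)) := by
      rw [Polynomial.IsRoot, ← hDeq s (lam s)]
      exact h3
    exact (aux_rootMult_one (Matrix.charpoly_monic _).ne_zero _).mpr ⟨hroot, hder⟩
end

section
/- Let q(x) = ⟨x, Qx⟩ with Q positive-definite symmetric on ℝ^k, and let g ∈ C¹_c(ℝ^k) with g(0) = 1. Then for v ∈ ℝ^k with ‖v‖ ≤ √(Ct), as t → ∞: t^{-k/2} ∫_{ℝ^k} exp(i⟨x/√t, v⟩) exp(-q(x)) g(x/√t) dx/(2π)^k = (det Q)^{-1/2}(4πt)^{-k/2} exp(-⟨v, Q^{-1}v⟩/(4t)) + O(t^{-(k+1)/2}), uniformly in such v, provided additionally that |g(x) − 1 − ∇g(0)·x| ≤ c‖x‖² for all x. -/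
open Matrix MeasureTheory Real
open scoped MatrixOrder

set_option maxHeartbeats 1000000


lemma dot_symm_mulVec {k : ℕ} (S : Matrix (Fin k) (Fin k) ℝ) (h : Sᵀ = S) (x y : Fin k → ℝ) :
    x ⬝ᵥ (S *ᵥ y) = (S *ᵥ x) ⬝ᵥ y := by
  rw [dotProduct_mulVec, ← Matrix.vecMul_transpose, h]

lemma cont_dot {k : ℕ} (M : Matrix (Fin k) (Fin k) ℝ) :
    Continuous fun x : Fin k → ℝ => x ⬝ᵥ (M *ᵥ x) := by
  simp only [dotProduct, Matrix.mulVec]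
  exact continuous_finset_sum _ fun i _ => (continuous_apply i).mul
    (continuous_finset_sum _ fun j _ => continuous_const.mul (continuous_apply j))

lemma cont_dot' {k : ℕ} (ξ : Fin k → ℝ) :
    Continuous fun x : Fin k → ℝ => x ⬝ᵥ ξ := by
  simp only [dotProduct]
  exact continuous_finset_sum _ fun i _ => (continuous_apply i).mul continuous_const

lemma gauss_fourier {k : ℕ} {Q : Matrix (Fin k) (Fin k) ℝ} (hQ : Q.PosDef) (ξ : Fin k → ℝ) :
    ∫ x : Fin k → ℝ, Complex.exp (Complex.I * ((x ⬝ᵥ ξ : ℝ) : ℂ)) *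
        ((Real.exp (-(x ⬝ᵥ (Q *ᵥ x))) : ℝ) : ℂ)
      = (((Real.sqrt π) ^ k / Real.sqrt Q.det * Real.exp (-(ξ ⬝ᵥ (Q⁻¹ *ᵥ ξ)) / 4) : ℝ) : ℂ) := by
  classical
  set S := CFC.sqrt Q with hSdef
  have hSS : S * S = Q := CFC.sqrt_mul_sqrt_self Q hQ.posSemidef.nonneg
  have hSh : Sᵀ = S := by
    have := (CFC.sqrt_nonneg Q).posSemidef.isHermitian
    simpa [Matrix.IsHermitian, Matrix.conjTranspose_eq_transpose_of_trivial] using this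
  have hdetQ : 0 < Q.det := hQ.det_pos
  have hdet2 : S.det * S.det = Q.det := by rw [← Matrix.det_mul, hSS]
  have hdetnn : 0 ≤ S.det := by
    rw [(CFC.sqrt_nonneg Q).posSemidef.isHermitian.det_eq_prod_eigenvalues]
    exact Finset.prod_nonneg fun i _ => by
      simpa using (CFC.sqrt_nonneg Q).posSemidef.eigenvalues_nonneg i
  have hdetS : S.det = Real.sqrt Q.det := by
    nlinarith [Real.sq_sqrt hdetQ.le, Real.sqrt_nonneg Q.det]
  have hdSpos : 0 < S.det := by rw [hdetS]; exact Real.sqrt_pos.2 hdetQ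
  have hu : IsUnit S.det := (ne_of_gt hdSpos).isUnit
  have hSinvS : S⁻¹ * S = 1 := Matrix.nonsing_inv_mul S hu
  have hSSinv : S * S⁻¹ = 1 := Matrix.mul_nonsing_inv S hu
  have hSinvT : (S⁻¹)ᵀ = S⁻¹ := by rw [Matrix.transpose_nonsing_inv, hSh]
  set w : Fin k → ℝ := S⁻¹ *ᵥ ξ with hw
  have hQinv : Q⁻¹ = S⁻¹ * S⁻¹ := by rw [← hSS, Matrix.mul_inv_rev]
  have hww : w ⬝ᵥ w = ξ ⬝ᵥ (Q⁻¹ *ᵥ ξ) := by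
    rw [hw, dot_symm_mulVec S⁻¹ hSinvT, Matrix.mulVec_mulVec, ← hQinv, dotProduct_comm,
      dot_symm_mulVec Q⁻¹ (by rw [hQinv, Matrix.transpose_mul, hSinvT]) ξ ξ]
  set F : (Fin k → ℝ) → ℂ := fun x => Complex.exp (Complex.I * ((x ⬝ᵥ ξ : ℝ) : ℂ)) *
        ((Real.exp (-(x ⬝ᵥ (Q *ᵥ x))) : ℝ) : ℂ) with hF
  have hcont : Continuous F := by
    apply Continuous.mul
    · exact Complex.continuous_exp.comp (by
        exact continuous_const.mul (Complex.continuous_ofReal.comp (cont_dot' ξ)))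
    · exact Complex.continuous_ofReal.comp (Real.continuous_exp.comp (cont_dot Q).neg)
  -- change of variables
  have hdetlin : LinearMap.det (Matrix.toLin' S⁻¹) = (S.det)⁻¹ := by
    rw [LinearMap.det_toLin', Matrix.det_nonsing_inv, Ring.inverse_eq_inv']
  have hmap : Measure.map (Matrix.toLin' S⁻¹) volume = ENNReal.ofReal S.det • volume := by
    rw [Real.map_linearMap_volume_pi_eq_smul_volume_pi (by rw [hdetlin]; positivity)]
    rw [hdetlin]
    congr 1
    rw [inv_inv, abs_of_pos hdSpos]
  have h1 : (∫ y : Fin k → ℝ, F (S⁻¹ *ᵥ y)) = S.det • ∫ x, F x := by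
    have h2 : (∫ y : Fin k → ℝ, F (Matrix.toLin' S⁻¹ y)) =
        ∫ x, F x ∂(Measure.map (Matrix.toLin' S⁻¹) volume) :=
      (integral_map (Continuous.aemeasurable (by
        exact LinearMap.continuous_on_pi _)) hcont.aestronglyMeasurable).symm
    simp only [Matrix.toLin'_apply] at h2
    rw [h2, hmap, integral_smul_measure, ENNReal.toReal_ofReal hdSpos.le]
  have point : ∀ y : Fin k → ℝ, F (S⁻¹ *ᵥ y) =
      Complex.exp (- ∑ i, 1 * (y i : ℂ) ^ 2 + ∑ i, (Complex.I * w i) * y i) := by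
    intro y
    have e1 : (S⁻¹ *ᵥ y) ⬝ᵥ ξ = y ⬝ᵥ w := by
      rw [hw, dot_symm_mulVec S⁻¹ hSinvT y ξ]
    have e2 : (S⁻¹ *ᵥ y) ⬝ᵥ (Q *ᵥ (S⁻¹ *ᵥ y)) = y ⬝ᵥ y := by
      rw [Matrix.mulVec_mulVec, ← hSS, Matrix.mul_assoc, hSSinv, Matrix.mul_one,
        dot_symm_mulVec S hSh, Matrix.mulVec_mulVec, hSSinv, Matrix.one_mulVec]
    rw [hF]
    simp only [e1, e2]
    rw [Complex.ofReal_exp, ← Complex.exp_add]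
    congr 1
    push_cast [dotProduct]
    rw [Finset.mul_sum, add_comm]
    congr 1
    · rw [neg_inj]
      exact Finset.sum_congr rfl fun i _ => by ring
    · exact Finset.sum_congr rfl fun i _ => by ring
  rw [show (∫ x, F x) = (S.det)⁻¹ • ∫ y : Fin k → ℝ, F (S⁻¹ *ᵥ y) by
    rw [h1, smul_smul, inv_mul_cancel₀ (ne_of_gt hdSpos), one_smul]]
  have h3 : (∫ y : Fin k → ℝ, F (S⁻¹ *ᵥ y)) =
      ∏ i : Fin k, ((π : ℂ) / 1) ^ (1 / 2 : ℂ) * Complex.exp ((Complex.I * w i) ^ 2 / (4 * 1)) := by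
    simp_rw [point]
    exact GaussianFourier.integral_cexp_neg_sum_mul_add (fun _ => by norm_num) _
  rw [h3]
  have h4 : ((π : ℂ) / 1) ^ (1 / 2 : ℂ) = ((Real.sqrt π : ℝ) : ℂ) := by
    rw [div_one, Real.sqrt_eq_rpow, Complex.ofReal_cpow pi_pos.le]
    norm_num
  rw [Finset.prod_mul_distrib, Finset.prod_const, h4, ← Complex.exp_sum]
  have h5 : (∑ i : Fin k, (Complex.I * w i) ^ 2 / (4 * 1)) = ((-(ξ ⬝ᵥ (Q⁻¹ *ᵥ ξ)) / 4 : ℝ) : ℂ) := by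
    have e3 : ∀ i : Fin k, (Complex.I * (w i : ℂ)) ^ 2 / (4 * 1) = -((w i : ℂ) * (w i)) / 4 :=
      fun i => by rw [mul_pow, Complex.I_sq]; ring
    simp_rw [e3]
    rw [← hww]
    push_cast [dotProduct]
    rw [← Finset.sum_div, Finset.sum_neg_distrib]
  rw [h5, hdetS, Complex.real_smul, Finset.card_univ, Fintype.card_fin]
  push_cast
  ring

lemma int_gauss {k : ℕ} {b : ℝ} (hb : 0 < b) :
    Integrable fun x : Fin k → ℝ => rexp (-(b * (x ⬝ᵥ x))) := by
  have key : (fun x : Fin k → ℝ => rexp (-(b * (x ⬝ᵥ x)))) =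
      fun x => ∏ i, rexp (-(b * (x i) ^ 2)) := by
    funext x
    rw [← Real.exp_sum]
    congr 1
    simp only [dotProduct, ← Finset.sum_neg_distrib]
    rw [Finset.mul_sum, Finset.sum_neg_distrib]
    congr 1
    exact Finset.sum_congr rfl fun i _ => by ring
  rw [key]
  exact Integrable.fintype_prod (f := fun (_ : Fin k) (t : ℝ) => rexp (-(b * t ^ 2)))
    fun i => by simpa [neg_mul] using integrable_exp_neg_mul_sq hb

lemma int_gauss_moment {k : ℕ} {b : ℝ} (hb : 0 < b) :
    Integrable fun x : Fin k → ℝ => rexp (-(b * (x ⬝ᵥ x))) * (x ⬝ᵥ x) := by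
  have key : (fun x : Fin k → ℝ => rexp (-(b * (x ⬝ᵥ x))) * (x ⬝ᵥ x)) =
      fun x => ∑ j, ∏ i, (rexp (-(b * (x i) ^ 2)) * (if i = j then (x i) ^ 2 else 1)) := by
    funext x
    simp_rw [Finset.prod_mul_distrib, Finset.prod_ite_eq']
    simp only [Finset.mem_univ, if_true]
    rw [← Finset.mul_sum]
    congr 1
    · rw [← Real.exp_sum]
      congr 1
      simp only [dotProduct]
      rw [Finset.mul_sum, Finset.sum_neg_distrib]
      congr 1
      exact Finset.sum_congr rfl fun i _ => by ring
    · simp only [dotProduct]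
      exact Finset.sum_congr rfl fun i _ => (sq (x i)).symm
  rw [key]
  apply integrable_finset_sum
  intro j _
  apply Integrable.fintype_prod (f := fun i (t : ℝ) => rexp (-(b * t ^ 2)) * (if i = j then t ^ 2 else 1))
  intro i
  by_cases h : i = j
  · simp only [h, if_true]
    have := integrable_rpow_mul_exp_neg_mul_sq hb (s := 2) (by norm_num)
    simp only [show ((2 : ℝ) : ℝ) = ((2 : ℕ) : ℝ) by norm_num, Real.rpow_natCast] at this
    exact this.congr (Filter.Eventually.of_forall fun t => by simp only [neg_mul]; ring)
  · simp only [h, if_false, mul_one]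
    simpa [neg_mul] using integrable_exp_neg_mul_sq hb

lemma mulVec_dot_le {k : ℕ} (M : Matrix (Fin k) (Fin k) ℝ) (x : Fin k → ℝ) :
    (M *ᵥ x) ⬝ᵥ (M *ᵥ x) ≤ (∑ i, ∑ j, (M i j) ^ 2) * (x ⬝ᵥ x) := by
  simp only [dotProduct, Matrix.mulVec]
  rw [Finset.sum_mul]
  apply Finset.sum_le_sum
  intro i _
  calc (∑ j, M i j * x j) * (∑ j, M i j * x j) = (∑ j, M i j * x j) ^ 2 := (sq _).symm
    _ ≤ (∑ j, (M i j) ^ 2) * ∑ j, (x j) ^ 2 := Finset.sum_mul_sq_le_sq_mul_sq _ _ _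
    _ = (∑ j, (M i j) ^ 2) * ∑ j, x j * x j := by
        congr 1
        exact Finset.sum_congr rfl fun j _ => sq (x j)

lemma cont_dot_self {k : ℕ} : Continuous fun x : Fin k → ℝ => x ⬝ᵥ x := by
  simp only [dotProduct]
  exact continuous_finset_sum _ fun i _ =>
    (continuous_apply i).mul (continuous_apply i)

lemma rpow_half_pow {t : ℝ} (ht : 0 < t) (k : ℕ) :
    t ^ (-(k : ℝ) / 2) = ((Real.sqrt t)⁻¹) ^ k := by
  symm
  rw [Real.sqrt_eq_rpow, ← Real.rpow_neg ht.le, ← Real.rpow_natCast (t ^ (-(1/2) : ℝ)) k,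
    ← Real.rpow_mul ht.le]
  congr 1
  ring

/-- Stationary-phase-type asymptotics: for positive-definite symmetric `Q` and a C¹
compactly-supported `g` with `g(0) = 1` and quadratic Taylor remainder bound, as `t → ∞`,
`t^{-k/2} ∫ e^{i⟨x/√t,v⟩} e^{-⟨x,Qx⟩} g(x/√t) dx/(2π)^k` equals
`(det Q)^{-1/2}(4πt)^{-k/2} e^{-⟨v,Q⁻¹v⟩/(4t)} + O(t^{-(k+1)/2})`, uniformly over
`‖v‖ ≤ √(Ct)`. -/
theorem stmt13 (k : ℕ) (Q : Matrix (Fin k) (Fin k) ℝ) (hQ : Q.PosDef)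
    (g : (Fin k → ℝ) → ℝ) (hg : ContDiff ℝ 1 g) (hgc : HasCompactSupport g)
    (hg0 : g 0 = 1)
    (c : ℝ) (hc : ∀ x : Fin k → ℝ, |g x - 1 - fderiv ℝ g 0 x| ≤ c * (x ⬝ᵥ x))
    (C : ℝ) (hC : 0 < C) :
    ∃ K T : ℝ, ∀ t : ℝ, T ≤ t → ∀ v : Fin k → ℝ, v ⬝ᵥ v ≤ C * t →
      ‖(((((t : ℝ) ^ (-(k : ℝ) / 2) : ℝ)) : ℂ) *
            ∫ x : Fin k → ℝ,
              Complex.exp (Complex.I * ((((Real.sqrt t)⁻¹ • x) ⬝ᵥ v : ℝ) : ℂ)) *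
                ((Real.exp (-(x ⬝ᵥ (Q *ᵥ x))) : ℝ) : ℂ) *
                ((g ((Real.sqrt t)⁻¹ • x) : ℝ) : ℂ)) / ((2 * π) ^ k : ℂ) -
          (((Q.det ^ (-(1 : ℝ) / 2) * (4 * π * t) ^ (-(k : ℝ) / 2) *
            Real.exp (-(v ⬝ᵥ (Q⁻¹ *ᵥ v)) / (4 * t)) : ℝ)) : ℂ)‖
        ≤ K * t ^ (-((k : ℝ) + 1) / 2) := by
  classical
  obtain ⟨Mg, hMg⟩ := hg.continuous.bounded_above_of_compact_support hgc
  set D : (Fin k → ℝ) →L[ℝ] ℝ := fderiv ℝ g 0 with hD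
  set c' : ℝ := max c 0 with hc'
  have hc'0 : (0:ℝ) ≤ c' := le_max_right _ _
  set S := CFC.sqrt Q with hSdef
  have hSS : S * S = Q := CFC.sqrt_mul_sqrt_self Q hQ.posSemidef.nonneg
  have hSh : Sᵀ = S := by
    have := (CFC.sqrt_nonneg Q).posSemidef.isHermitian
    simpa [Matrix.IsHermitian, Matrix.conjTranspose_eq_transpose_of_trivial] using this
  have hdetQ : 0 < Q.det := hQ.det_pos
  have hdet2 : S.det * S.det = Q.det := by rw [← Matrix.det_mul, hSS]
  have hdSne : S.det ≠ 0 := by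
    intro h
    rw [h, mul_zero] at hdet2
    exact hdetQ.ne' hdet2.symm
  have hu : IsUnit S.det := hdSne.isUnit
  have hSinvS : S⁻¹ * S = 1 := Matrix.nonsing_inv_mul S hu
  clear hSdef
  clear_value S
  set R : ℝ := ∑ i, ∑ j, (S⁻¹ i j) ^ 2 with hR
  have hR0 : (0:ℝ) ≤ R := Finset.sum_nonneg fun i _ => Finset.sum_nonneg fun j _ => sq_nonneg _
  set ε : ℝ := (R + 1)⁻¹ with hε
  have hε0 : 0 < ε := by rw [hε]; positivity
  have hdotself : ∀ y : Fin k → ℝ, 0 ≤ y ⬝ᵥ y :=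
    fun y => Finset.sum_nonneg fun i _ => mul_self_nonneg _
  have hq0 : ∀ x : Fin k → ℝ, 0 ≤ x ⬝ᵥ (Q *ᵥ x) := fun x => by
    simpa using hQ.posSemidef.dotProduct_mulVec_nonneg x
  have hqlow : ∀ x : Fin k → ℝ, ε * (x ⬝ᵥ x) ≤ x ⬝ᵥ (Q *ᵥ x) := by
    intro x
    have h1 : x ⬝ᵥ (Q *ᵥ x) = (S *ᵥ x) ⬝ᵥ (S *ᵥ x) := by
      rw [← hSS, ← Matrix.mulVec_mulVec, dot_symm_mulVec S hSh]
    have h2 : x ⬝ᵥ x ≤ R * ((S *ᵥ x) ⬝ᵥ (S *ᵥ x)) := by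
      have := mulVec_dot_le S⁻¹ (S *ᵥ x)
      rwa [Matrix.mulVec_mulVec, hSinvS, Matrix.one_mulVec] at this
    rw [h1]
    have h3 : ε * (R + 1) = 1 := inv_mul_cancel₀ (by positivity)
    calc ε * (x ⬝ᵥ x) ≤ ε * (R * ((S *ᵥ x) ⬝ᵥ (S *ᵥ x))) :=
          mul_le_mul_of_nonneg_left h2 hε0.le
      _ ≤ ε * (R * ((S *ᵥ x) ⬝ᵥ (S *ᵥ x))) + ε * ((S *ᵥ x) ⬝ᵥ (S *ᵥ x)) :=
          le_add_of_nonneg_right (mul_nonneg hε0.le (hdotself _))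
      _ = (ε * (R + 1)) * ((S *ᵥ x) ⬝ᵥ (S *ᵥ x)) := by ring
      _ = (S *ᵥ x) ⬝ᵥ (S *ᵥ x) := by rw [h3, one_mul]
  -- integrability
  have hqcont : Continuous fun x : Fin k → ℝ => x ⬝ᵥ (Q *ᵥ x) := cont_dot Q
  have hG0 : Integrable fun x : Fin k → ℝ => rexp (-(x ⬝ᵥ (Q *ᵥ x))) := by
    refine (int_gauss (k := k) hε0).mono'
      (Real.continuous_exp.comp hqcont.neg).aestronglyMeasurable
      (Filter.Eventually.of_forall fun x => ?_)
    rw [Real.norm_eq_abs, abs_of_pos (Real.exp_pos _)]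
    exact Real.exp_le_exp.2 (neg_le_neg (hqlow x))
  have hG1 : Integrable fun x : Fin k → ℝ => rexp (-(x ⬝ᵥ (Q *ᵥ x))) * (x ⬝ᵥ x) := by
    refine (int_gauss_moment (k := k) hε0).mono'
      ((Real.continuous_exp.comp hqcont.neg).mul cont_dot_self).aestronglyMeasurable
      (Filter.Eventually.of_forall fun x => ?_)
    rw [Real.norm_eq_abs, abs_of_nonneg (mul_nonneg (Real.exp_pos _).le (hdotself x))]
    exact mul_le_mul_of_nonneg_right (Real.exp_le_exp.2 (neg_le_neg (hqlow x))) (hdotself x)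
  have hBint : Integrable fun x : Fin k → ℝ =>
      rexp (-(x ⬝ᵥ (Q *ᵥ x))) * (‖D‖ + (‖D‖ + c') * (x ⬝ᵥ x)) := by
    have heq : (fun x : Fin k → ℝ => rexp (-(x ⬝ᵥ (Q *ᵥ x))) * (‖D‖ + (‖D‖ + c') * (x ⬝ᵥ x)))
        = fun x => ‖D‖ * rexp (-(x ⬝ᵥ (Q *ᵥ x)))
            + (‖D‖ + c') * (rexp (-(x ⬝ᵥ (Q *ᵥ x))) * (x ⬝ᵥ x)) := by
      funext x; ring
    rw [heq]
    exact (hG0.const_mul _).add (hG1.const_mul _)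
  set B : ℝ := ∫ x : Fin k → ℝ, rexp (-(x ⬝ᵥ (Q *ᵥ x))) * (‖D‖ + (‖D‖ + c') * (x ⬝ᵥ x)) with hB
  refine ⟨B / (2 * π) ^ k, 1, ?_⟩
  intro t ht v hv
  have ht0 : (0:ℝ) < t := lt_of_lt_of_le one_pos ht
  have hst : 1 ≤ Real.sqrt t := by
    rw [show (1:ℝ) = Real.sqrt 1 by simp]
    exact Real.sqrt_le_sqrt ht
  set s : ℝ := (Real.sqrt t)⁻¹ with hs
  have hs0 : 0 < s := by rw [hs]; positivity
  have hs1 : s ≤ 1 := by rw [hs]; exact inv_le_one_of_one_le₀ hst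
  have hssq : s * s = t⁻¹ := by
    rw [hs, ← mul_inv, Real.mul_self_sqrt ht0.le]
  -- pointwise bound on g
  have hnormle : ∀ z : Fin k → ℝ, ‖z‖ ≤ Real.sqrt (z ⬝ᵥ z) := by
    intro z
    rw [pi_norm_le_iff_of_nonneg (Real.sqrt_nonneg _)]
    intro i
    rw [Real.norm_eq_abs, ← Real.sqrt_sq_eq_abs]
    apply Real.sqrt_le_sqrt
    rw [sq]
    exact Finset.single_le_sum (f := fun j => z j * z j)
      (fun j _ => mul_self_nonneg _) (Finset.mem_univ i)
  have hgb : ∀ x : Fin k → ℝ, |g (s • x) - 1| ≤ s * (‖D‖ + (‖D‖ + c') * (x ⬝ᵥ x)) := by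
    intro x
    have hyy : (s • x) ⬝ᵥ (s • x) = s * s * (x ⬝ᵥ x) := by
      rw [smul_dotProduct, dotProduct_smul, smul_eq_mul, smul_eq_mul, mul_assoc]
    have hDy : |D (s • x)| ≤ ‖D‖ * Real.sqrt ((s • x) ⬝ᵥ (s • x)) :=
      le_trans (D.le_opNorm (s • x))
        (mul_le_mul_of_nonneg_left (hnormle (s • x)) (norm_nonneg D))
    have hsd : Real.sqrt ((s • x) ⬝ᵥ (s • x)) = s * Real.sqrt (x ⬝ᵥ x) := by
      rw [hyy, show s * s * (x ⬝ᵥ x) = s ^ 2 * (x ⬝ᵥ x) by ring,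
        Real.sqrt_mul (sq_nonneg s), Real.sqrt_sq hs0.le]
    have hsqle : Real.sqrt (x ⬝ᵥ x) ≤ 1 + (x ⬝ᵥ x) := by
      have h1 : (x ⬝ᵥ x) ≤ (1 + (x ⬝ᵥ x)) ^ 2 := by nlinarith [hdotself x]
      have h2 := Real.sqrt_le_sqrt h1
      rwa [Real.sqrt_sq (by linarith [hdotself x])] at h2
    have hrem : |g (s • x) - 1 - D (s • x)| ≤ c' * ((s • x) ⬝ᵥ (s • x)) :=
      le_trans (hc (s • x))
        (mul_le_mul_of_nonneg_right (le_max_left c 0) (hdotself (s • x)))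
    have habs : |g (s • x) - 1| ≤ |D (s • x)| + |g (s • x) - 1 - D (s • x)| :=
      calc |g (s • x) - 1| = |D (s • x) + (g (s • x) - 1 - D (s • x))| := by congr 1; ring
        _ ≤ |D (s • x)| + |g (s • x) - 1 - D (s • x)| := abs_add_le _ _
    calc |g (s • x) - 1| ≤ |D (s • x)| + |g (s • x) - 1 - D (s • x)| := habs
      _ ≤ ‖D‖ * (s * Real.sqrt (x ⬝ᵥ x)) + c' * (s * s * (x ⬝ᵥ x)) := by
          rw [← hsd, ← hyy]
          exact add_le_add hDy hrem
      _ ≤ ‖D‖ * (s * (1 + (x ⬝ᵥ x))) + c' * (s * (x ⬝ᵥ x)) := by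
          apply add_le_add
          · exact mul_le_mul_of_nonneg_left
              (mul_le_mul_of_nonneg_left hsqle hs0.le) (norm_nonneg _)
          · refine mul_le_mul_of_nonneg_left ?_ hc'0
            calc s * s * (x ⬝ᵥ x) ≤ 1 * s * (x ⬝ᵥ x) :=
                  mul_le_mul_of_nonneg_right
                    (mul_le_mul_of_nonneg_right hs1 hs0.le) (hdotself x)
              _ = s * (x ⬝ᵥ x) := by ring
      _ = s * (‖D‖ + (‖D‖ + c') * (x ⬝ᵥ x)) := by ring
  -- the two integrands
  set f1 : (Fin k → ℝ) → ℂ := fun x =>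
    Complex.exp (Complex.I * (((s • x) ⬝ᵥ v : ℝ) : ℂ)) *
      ((Real.exp (-(x ⬝ᵥ (Q *ᵥ x))) : ℝ) : ℂ) * ((g (s • x) : ℝ) : ℂ) with hf1
  set f2 : (Fin k → ℝ) → ℂ := fun x =>
    Complex.exp (Complex.I * ((x ⬝ᵥ (s • v) : ℝ) : ℂ)) *
      ((Real.exp (-(x ⬝ᵥ (Q *ᵥ x))) : ℝ) : ℂ) with hf2
  have hphase : ∀ x : Fin k → ℝ, ((s • x) ⬝ᵥ v) = (x ⬝ᵥ (s • v)) := fun x => by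
    rw [smul_dotProduct, dotProduct_smul]
  have hnorme : ∀ r : ℝ, ‖Complex.exp (Complex.I * (r : ℂ))‖ = 1 := fun r => by
    rw [Complex.norm_exp]
    simp
  have hphasecont : ∀ ξ : Fin k → ℝ, Continuous fun x : Fin k → ℝ =>
      Complex.exp (Complex.I * ((x ⬝ᵥ ξ : ℝ) : ℂ)) := fun ξ =>
    Complex.continuous_exp.comp (continuous_const.mul
      (Complex.continuous_ofReal.comp (cont_dot' ξ)))
  have hexpc : Continuous fun x : Fin k → ℝ => ((Real.exp (-(x ⬝ᵥ (Q *ᵥ x))) : ℝ) : ℂ) :=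
    Complex.continuous_ofReal.comp (Real.continuous_exp.comp hqcont.neg)
  have hcont1 : Continuous f1 := by
    rw [hf1]
    have : Continuous fun x : Fin k → ℝ =>
        Complex.exp (Complex.I * (((s • x) ⬝ᵥ v : ℝ) : ℂ)) := by
      simp only [hphase]
      exact hphasecont (s • v)
    exact (this.mul hexpc).mul
      (Complex.continuous_ofReal.comp (hg.continuous.comp (continuous_const_smul s)))
  have hcont2 : Continuous f2 := (hphasecont (s • v)).mul hexpc
  have hint1 : Integrable f1 := by
    refine (hG0.const_mul Mg).mono' hcont1.aestronglyMeasurable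
      (Filter.Eventually.of_forall fun x => ?_)
    rw [hf1]
    simp only [norm_mul, Complex.norm_real, Real.norm_eq_abs, abs_of_pos (Real.exp_pos _)]
    rw [hphase x, hnorme, one_mul]
    rw [mul_comm Mg]
    exact mul_le_mul_of_nonneg_left (by simpa [Real.norm_eq_abs] using hMg (s • x))
      (Real.exp_pos _).le
  have hint2 : Integrable f2 := by
    refine hG0.mono' hcont2.aestronglyMeasurable
      (Filter.Eventually.of_forall fun x => ?_)
    rw [hf2]
    simp only [norm_mul, Complex.norm_real, Real.norm_eq_abs, abs_of_pos (Real.exp_pos _)]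
    rw [hnorme, one_mul]
  have hdiff : ‖(∫ x, f1 x) - ∫ x, f2 x‖ ≤ s * B := by
    rw [← integral_sub hint1 hint2, hB, ← integral_const_mul]
    refine le_trans (norm_integral_le_integral_norm _) ?_
    refine integral_mono (hint1.sub hint2).norm (hBint.const_mul s) fun x => ?_
    have hfd : f1 x - f2 x =
        Complex.exp (Complex.I * (((s • x) ⬝ᵥ v : ℝ) : ℂ)) *
          ((Real.exp (-(x ⬝ᵥ (Q *ᵥ x))) : ℝ) : ℂ) * (((g (s • x) - 1 : ℝ)) : ℂ) := by
      rw [hf1, hf2]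
      simp only []
      rw [← hphase x]
      push_cast
      ring
    rw [hfd]
    simp only [norm_mul, Complex.norm_real, Real.norm_eq_abs, abs_of_pos (Real.exp_pos _)]
    rw [hnorme, one_mul]
    calc rexp (-(x ⬝ᵥ (Q *ᵥ x))) * |g (s • x) - 1|
        ≤ rexp (-(x ⬝ᵥ (Q *ᵥ x))) * (s * (‖D‖ + (‖D‖ + c') * (x ⬝ᵥ x))) :=
          mul_le_mul_of_nonneg_left (hgb x) (Real.exp_pos _).le
      _ = s * (rexp (-(x ⬝ᵥ (Q *ᵥ x))) * (‖D‖ + (‖D‖ + c') * (x ⬝ᵥ x))) := by ring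
  have hf2val : (∫ x, f2 x) =
      (((Real.sqrt π) ^ k / Real.sqrt Q.det * rexp (-(v ⬝ᵥ (Q⁻¹ *ᵥ v)) / (4 * t)) : ℝ) : ℂ) := by
    rw [hf2, gauss_fourier hQ (s • v)]
    have hsc : (s • v) ⬝ᵥ (Q⁻¹ *ᵥ (s • v)) = t⁻¹ * (v ⬝ᵥ (Q⁻¹ *ᵥ v)) := by
      rw [Matrix.mulVec_smul, smul_dotProduct, dotProduct_smul,
        smul_eq_mul, smul_eq_mul, ← mul_assoc, hssq]
    rw [hsc, show -(t⁻¹ * (v ⬝ᵥ (Q⁻¹ *ᵥ v))) / 4 = -(v ⬝ᵥ (Q⁻¹ *ᵥ v)) / (4 * t) by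
      field_simp [ht0.ne']]
  -- main term identity
  have hreal : ∀ E : ℝ, t ^ (-(k:ℝ)/2) * ((Real.sqrt π) ^ k / Real.sqrt Q.det * E) / (2*π) ^ k
      = Q.det ^ (-(1:ℝ)/2) * (4*π*t) ^ (-(k:ℝ)/2) * E := by
    intro E
    have e1 : t ^ (-(k:ℝ)/2) = ((Real.sqrt t)⁻¹) ^ k := rpow_half_pow ht0 k
    have e2 : (4*π*t) ^ (-(k:ℝ)/2) = ((Real.sqrt (4*π*t))⁻¹) ^ k :=
      rpow_half_pow (by positivity) k
    have e3 : Q.det ^ (-(1:ℝ)/2) = (Real.sqrt Q.det)⁻¹ := by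
      rw [show (-(1:ℝ)/2) = -(1/2 : ℝ) by norm_num, Real.rpow_neg hdetQ.le,
        ← Real.sqrt_eq_rpow]
    have e4 : Real.sqrt (4*π*t) = 2 * Real.sqrt π * Real.sqrt t := by
      rw [show (4:ℝ)*π*t = (2 * Real.sqrt π * Real.sqrt t) ^ 2 by
          nlinarith [Real.sq_sqrt Real.pi_pos.le, Real.sq_sqrt ht0.le,
            Real.sqrt_nonneg π, Real.sqrt_nonneg t],
        Real.sqrt_sq (by positivity)]
    rw [e1, e2, e3, e4]
    have hππ : (2*π : ℝ) = 2 * Real.sqrt π * Real.sqrt π := by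
      rw [mul_assoc, Real.mul_self_sqrt Real.pi_pos.le]
    rw [hππ]
    have h1 : Real.sqrt π ≠ 0 := by positivity
    have h2 : Real.sqrt t ≠ 0 := by positivity
    have h3 : Real.sqrt Q.det ≠ 0 := by positivity
    field_simp
    rw [← mul_pow, mul_assoc E, ← mul_pow, mul_comm E]
    congr 2
    field_simp
  have hmain : ((((t : ℝ) ^ (-(k : ℝ) / 2) : ℝ)) : ℂ) *
        (((Real.sqrt π) ^ k / Real.sqrt Q.det * rexp (-(v ⬝ᵥ (Q⁻¹ *ᵥ v)) / (4 * t)) : ℝ) : ℂ) /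
        ((2 * (π:ℝ) : ℂ) ^ k)
      = (((Q.det ^ (-(1 : ℝ) / 2) * (4 * π * t) ^ (-(k : ℝ) / 2) *
            Real.exp (-(v ⬝ᵥ (Q⁻¹ *ᵥ v)) / (4 * t)) : ℝ)) : ℂ) := by
    rw [show ((2 * (π:ℝ) : ℂ) ^ k) = (((2*π) ^ k : ℝ) : ℂ) by push_cast; ring]
    rw [← Complex.ofReal_mul, ← Complex.ofReal_div, hreal]
  -- assemble
  have hsplit : (((((t : ℝ) ^ (-(k : ℝ) / 2) : ℝ)) : ℂ) * (∫ x, f1 x)) / ((2 * (π:ℝ) : ℂ) ^ k) -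
      (((Q.det ^ (-(1 : ℝ) / 2) * (4 * π * t) ^ (-(k : ℝ) / 2) *
            Real.exp (-(v ⬝ᵥ (Q⁻¹ *ᵥ v)) / (4 * t)) : ℝ)) : ℂ)
      = (((((t : ℝ) ^ (-(k : ℝ) / 2) : ℝ)) : ℂ) * ((∫ x, f1 x) - ∫ x, f2 x)) /
          ((2 * (π:ℝ) : ℂ) ^ k) := by
    rw [← hmain, ← hf2val]
    ring
  rw [hsplit]
  rw [norm_div, norm_mul]
  have h2pik : ‖((2 * (π:ℝ) : ℂ)) ^ k‖ = (2*π) ^ k := by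
    rw [norm_pow, show ((2 * (π:ℝ) : ℂ)) = (((2*π : ℝ)) : ℂ) by push_cast; ring,
      Complex.norm_real, Real.norm_eq_abs, abs_of_pos (by positivity)]
  have hnorma : ‖((((t : ℝ) ^ (-(k : ℝ) / 2) : ℝ)) : ℂ)‖ = t ^ (-(k:ℝ)/2) := by
    rw [Complex.norm_real, Real.norm_eq_abs, abs_of_pos (Real.rpow_pos_of_pos ht0 _)]
  rw [h2pik, hnorma]
  have hfinal : t ^ (-(k:ℝ)/2) * (s * B) / (2*π) ^ k = B / (2*π) ^ k * t ^ (-((k:ℝ)+1)/2) := by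
    have hsrw : s = t ^ (-(1/2) : ℝ) := by
      rw [hs, Real.sqrt_eq_rpow, ← Real.rpow_neg ht0.le]
    rw [hsrw, show t ^ (-(k:ℝ)/2) * (t ^ (-(1/2):ℝ) * B) / (2*π) ^ k
        = B / (2*π) ^ k * (t ^ (-(k:ℝ)/2) * t ^ (-(1/2):ℝ)) by ring,
      ← Real.rpow_add ht0]
    congr 2
    ring
  calc t ^ (-(k:ℝ)/2) * ‖(∫ x, f1 x) - ∫ x, f2 x‖ / (2*π) ^ k
      ≤ t ^ (-(k:ℝ)/2) * (s * B) / (2*π) ^ k := by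
        apply div_le_div_of_nonneg_right ?_ (by positivity)
        exact mul_le_mul_of_nonneg_left hdiff (Real.rpow_pos_of_pos ht0 _).le
    _ = B / (2*π) ^ k * t ^ (-((k:ℝ)+1)/2) := hfinal
end
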